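/- For 0 ≤ k ≤ n−2, the function G_{n,k}(t) = ∫₀^t ds₁ ⋯ ∫_{s_{k−1}}^t ds_k [(t−s_k)^{n−k}/(n−k)!] ∏_{j=1}^k cosh c(s_j − s_{j−1}) · cosh c(t − s_k) (with s₀ = 0) satisfies the difference-differential equation G_{n,k}''(t) = 2 G_{n−1,k}'(t) − G_{n−2,k}(t) + c² G_{n,k}(t). -/

import Mathlib

open Real MeasureTheory intervalIntegral

/-- `G c n k t` is the iterated integral
`∫₀ᵗ ds₁ ⋯ ∫_{s_{k-1}}ᵗ ds_k ((t-s_k)^{n-k}/(n-k)!) ∏_{j=1}^k cosh c(s_j-s_{j-1}) · cosh c(t-s_k)`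
(with `s₀ = 0`), written through its convolution recursion. -/
noncomputable def G (c : ℝ) : ℕ → ℕ → ℝ → ℝ
  | n, 0, t => t ^ n / n.factorial * Real.cosh (c * t)
  | n, k + 1, t => ∫ s in (0:ℝ)..t, Real.cosh (c * s) * G c (n - 1) k (t - s)

/-- The `sinh` analogue of `G`. -/
noncomputable def Gs (c : ℝ) : ℕ → ℕ → ℝ → ℝ
  | n, 0, t => t ^ n / n.factorial * Real.sinh (c * t)
  | n, k + 1, t => ∫ s in (0:ℝ)..t, Real.sinh (c * s) * G c (n - 1) k (t - s)

/-- Explicit formula for the derivative of `G c n k` (valid for `1 ≤ n + k`). -/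
noncomputable def Gd (c : ℝ) : ℕ → ℕ → ℝ → ℝ
  | n, 0, t => G c (n - 1) 0 t + c * Gs c n 0 t
  | n, k + 1, t => c * Gs c n (k + 1) t + G c (n - 1) k t

/-- Explicit formula for the derivative of `Gs c n k` (valid for `1 ≤ n + k`). -/
noncomputable def Gsd (c : ℝ) : ℕ → ℕ → ℝ → ℝ
  | n, 0, t => Gs c (n - 1) 0 t + c * G c n 0 t
  | n, k + 1, t => c * G c n (k + 1) t

/-- Explicit formula for the second derivative of `G c n k` (valid for `2 ≤ n`). -/
noncomputable def Gdd (c : ℝ) : ℕ → ℕ → ℝ → ℝ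
  | n, 0, t => Gd c (n - 1) 0 t + c * Gsd c n 0 t
  | n, k + 1, t => c * (c * G c n (k + 1) t) + Gd c (n - 1) k t

lemma primitive_hasDerivAt {f : ℝ → ℝ} (hf : Continuous f) (t : ℝ) :
    HasDerivAt (fun u => ∫ s in (0:ℝ)..u, f s) (f t) t :=
  intervalIntegral.integral_hasDerivAt_right (hf.intervalIntegrable _ _)
    hf.stronglyMeasurable.stronglyMeasurableAtFilter hf.continuousAt


lemma hasDerivAt_cosh_mul (c t : ℝ) :
    HasDerivAt (fun t : ℝ => Real.cosh (c * t)) (Real.sinh (c * t) * c) t := by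
  have h : HasDerivAt (fun t : ℝ => c * t) c t := by simpa using (hasDerivAt_id t).const_mul c
  exact h.cosh

lemma hasDerivAt_sinh_mul (c t : ℝ) :
    HasDerivAt (fun t : ℝ => Real.sinh (c * t)) (Real.cosh (c * t) * c) t := by
  have h : HasDerivAt (fun t : ℝ => c * t) c t := by simpa using (hasDerivAt_id t).const_mul c
  exact h.sinh

lemma conv_cosh (c : ℝ) {g : ℝ → ℝ} (hg : Continuous g) (t : ℝ) :
    (∫ s in (0:ℝ)..t, Real.cosh (c * s) * g (t - s))
      = Real.cosh (c * t) * (∫ s in (0:ℝ)..t, Real.cosh (c * s) * g s)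
        - Real.sinh (c * t) * ∫ s in (0:ℝ)..t, Real.sinh (c * s) * g s := by
  have h1 : (∫ s in (0:ℝ)..t, Real.cosh (c * s) * g (t - s))
      = ∫ x in (0:ℝ)..t, Real.cosh (c * (t - x)) * g x := by
    have h := intervalIntegral.integral_comp_sub_left
      (fun x => Real.cosh (c * (t - x)) * g x) t (a := 0) (b := t)
    simpa [sub_sub_cancel] using h
  rw [h1]
  have h2 : ∀ x ∈ Set.uIcc (0:ℝ) t, Real.cosh (c * (t - x)) * g x
      = Real.cosh (c * t) * (Real.cosh (c * x) * g x)
        - Real.sinh (c * t) * (Real.sinh (c * x) * g x) := by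
    intro x _
    rw [mul_sub, Real.cosh_sub]; ring
  rw [intervalIntegral.integral_congr h2, intervalIntegral.integral_sub,
    intervalIntegral.integral_const_mul, intervalIntegral.integral_const_mul]
  · exact ((continuous_const.mul
      (((Real.continuous_cosh.comp (continuous_const.mul continuous_id)).mul hg)))).intervalIntegrable _ _
  · exact ((continuous_const.mul
      (((Real.continuous_sinh.comp (continuous_const.mul continuous_id)).mul hg)))).intervalIntegrable _ _

lemma conv_sinh (c : ℝ) {g : ℝ → ℝ} (hg : Continuous g) (t : ℝ) :
    (∫ s in (0:ℝ)..t, Real.sinh (c * s) * g (t - s))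
      = Real.sinh (c * t) * (∫ s in (0:ℝ)..t, Real.cosh (c * s) * g s)
        - Real.cosh (c * t) * ∫ s in (0:ℝ)..t, Real.sinh (c * s) * g s := by
  have h1 : (∫ s in (0:ℝ)..t, Real.sinh (c * s) * g (t - s))
      = ∫ x in (0:ℝ)..t, Real.sinh (c * (t - x)) * g x := by
    have h := intervalIntegral.integral_comp_sub_left
      (fun x => Real.sinh (c * (t - x)) * g x) t (a := 0) (b := t)
    simpa [sub_sub_cancel] using h
  rw [h1]
  have h2 : ∀ x ∈ Set.uIcc (0:ℝ) t, Real.sinh (c * (t - x)) * g x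
      = Real.sinh (c * t) * (Real.cosh (c * x) * g x)
        - Real.cosh (c * t) * (Real.sinh (c * x) * g x) := by
    intro x _
    rw [mul_sub, Real.sinh_sub]; ring
  rw [intervalIntegral.integral_congr h2, intervalIntegral.integral_sub,
    intervalIntegral.integral_const_mul, intervalIntegral.integral_const_mul]
  · exact ((continuous_const.mul
      (((Real.continuous_cosh.comp (continuous_const.mul continuous_id)).mul hg)))).intervalIntegrable _ _
  · exact ((continuous_const.mul
      (((Real.continuous_sinh.comp (continuous_const.mul continuous_id)).mul hg)))).intervalIntegrable _ _

lemma cont_G (c : ℝ) : ∀ k n, Continuous (G c n k) := by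
  intro k
  induction k with
  | zero =>
    intro n
    have h : G c n 0 = fun t => t ^ n / n.factorial * Real.cosh (c * t) := funext fun _ => rfl
    rw [h]; fun_prop
  | succ k ih =>
    intro n
    have hg := ih (n - 1)
    have h : G c n (k + 1) = fun t =>
        Real.cosh (c * t) * (∫ s in (0:ℝ)..t, Real.cosh (c * s) * G c (n - 1) k s)
          - Real.sinh (c * t) * ∫ s in (0:ℝ)..t, Real.sinh (c * s) * G c (n - 1) k s :=
      funext fun t => conv_cosh c hg t
    rw [h]
    have hintA : Continuous (fun s : ℝ => Real.cosh (c * s) * G c (n - 1) k s) :=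
      (Real.continuous_cosh.comp (continuous_const.mul continuous_id)).mul hg
    have hintB : Continuous (fun s : ℝ => Real.sinh (c * s) * G c (n - 1) k s) :=
      (Real.continuous_sinh.comp (continuous_const.mul continuous_id)).mul hg
    have hA' : Differentiable ℝ (fun t => ∫ s in (0:ℝ)..t, Real.cosh (c * s) * G c (n - 1) k s) :=
      fun t => (primitive_hasDerivAt hintA t).differentiableAt
    have hB' : Differentiable ℝ (fun t => ∫ s in (0:ℝ)..t, Real.sinh (c * s) * G c (n - 1) k s) :=
      fun t => (primitive_hasDerivAt hintB t).differentiableAt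
    have hA : Continuous (fun t => ∫ s in (0:ℝ)..t, Real.cosh (c * s) * G c (n - 1) k s) :=
      hA'.continuous
    have hB : Continuous (fun t => ∫ s in (0:ℝ)..t, Real.sinh (c * s) * G c (n - 1) k s) :=
      hB'.continuous
    exact ((Real.continuous_cosh.comp (continuous_const.mul continuous_id)).mul hA).sub
      ((Real.continuous_sinh.comp (continuous_const.mul continuous_id)).mul hB)

lemma G_succ_eq (c : ℝ) (n k : ℕ) (t : ℝ) :
    G c n (k + 1) t
      = Real.cosh (c * t) * (∫ s in (0:ℝ)..t, Real.cosh (c * s) * G c (n - 1) k s)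
        - Real.sinh (c * t) * ∫ s in (0:ℝ)..t, Real.sinh (c * s) * G c (n - 1) k s :=
  conv_cosh c (cont_G c k (n - 1)) t

lemma Gs_succ_eq (c : ℝ) (n k : ℕ) (t : ℝ) :
    Gs c n (k + 1) t
      = Real.sinh (c * t) * (∫ s in (0:ℝ)..t, Real.cosh (c * s) * G c (n - 1) k s)
        - Real.cosh (c * t) * ∫ s in (0:ℝ)..t, Real.sinh (c * s) * G c (n - 1) k s :=
  conv_sinh c (cont_G c k (n - 1)) t

lemma hasDerivAt_G_succ (c : ℝ) (n k : ℕ) (t : ℝ) :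
    HasDerivAt (G c n (k + 1)) (c * Gs c n (k + 1) t + G c (n - 1) k t) t := by
  have hg := cont_G c k (n - 1)
  have hfun : G c n (k + 1) = fun t =>
      Real.cosh (c * t) * ((fun u => ∫ s in (0:ℝ)..u, Real.cosh (c * s) * G c (n - 1) k s) t)
        - Real.sinh (c * t) * ((fun u => ∫ s in (0:ℝ)..u, Real.sinh (c * s) * G c (n - 1) k s) t) :=
    funext fun t => G_succ_eq c n k t
  rw [hfun]
  have hA : HasDerivAt (fun u => ∫ s in (0:ℝ)..u, Real.cosh (c * s) * G c (n - 1) k s)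
      (Real.cosh (c * t) * G c (n - 1) k t) t :=
    primitive_hasDerivAt ((Real.continuous_cosh.comp (continuous_const.mul continuous_id)).mul hg) t
  have hB : HasDerivAt (fun u => ∫ s in (0:ℝ)..u, Real.sinh (c * s) * G c (n - 1) k s)
      (Real.sinh (c * t) * G c (n - 1) k t) t :=
    primitive_hasDerivAt ((Real.continuous_sinh.comp (continuous_const.mul continuous_id)).mul hg) t
  have hch : HasDerivAt (fun t : ℝ => Real.cosh (c * t)) (Real.sinh (c * t) * c) t :=
    hasDerivAt_cosh_mul c t
  have hsh : HasDerivAt (fun t : ℝ => Real.sinh (c * t)) (Real.cosh (c * t) * c) t :=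
    hasDerivAt_sinh_mul c t
  have h := (hch.mul hA).sub (hsh.mul hB)
  convert h using 1 <;> try rfl
  rw [Gs_succ_eq c n k t]
  have hid := Real.cosh_sq_sub_sinh_sq (c * t)
  linear_combination (-(G c (n - 1) k t)) * hid

lemma hasDerivAt_Gs_succ (c : ℝ) (n k : ℕ) (t : ℝ) :
    HasDerivAt (Gs c n (k + 1)) (c * G c n (k + 1) t) t := by
  have hg := cont_G c k (n - 1)
  have hfun : Gs c n (k + 1) = fun t =>
      Real.sinh (c * t) * ((fun u => ∫ s in (0:ℝ)..u, Real.cosh (c * s) * G c (n - 1) k s) t)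
        - Real.cosh (c * t) * ((fun u => ∫ s in (0:ℝ)..u, Real.sinh (c * s) * G c (n - 1) k s) t) :=
    funext fun t => Gs_succ_eq c n k t
  rw [hfun]
  have hA : HasDerivAt (fun u => ∫ s in (0:ℝ)..u, Real.cosh (c * s) * G c (n - 1) k s)
      (Real.cosh (c * t) * G c (n - 1) k t) t :=
    primitive_hasDerivAt ((Real.continuous_cosh.comp (continuous_const.mul continuous_id)).mul hg) t
  have hB : HasDerivAt (fun u => ∫ s in (0:ℝ)..u, Real.sinh (c * s) * G c (n - 1) k s)
      (Real.sinh (c * t) * G c (n - 1) k t) t :=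
    primitive_hasDerivAt ((Real.continuous_sinh.comp (continuous_const.mul continuous_id)).mul hg) t
  have hch : HasDerivAt (fun t : ℝ => Real.cosh (c * t)) (Real.sinh (c * t) * c) t :=
    hasDerivAt_cosh_mul c t
  have hsh : HasDerivAt (fun t : ℝ => Real.sinh (c * t)) (Real.cosh (c * t) * c) t :=
    hasDerivAt_sinh_mul c t
  have h := (hsh.mul hA).sub (hch.mul hB)
  convert h using 1 <;> try rfl
  rw [G_succ_eq c n k t]
  ring

lemma hasDerivAt_G (c : ℝ) (n k : ℕ) (t : ℝ) (h : 1 ≤ n + k) :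
    HasDerivAt (G c n k) (Gd c n k t) t := by
  match k with
  | 0 =>
    obtain ⟨m, rfl⟩ : ∃ m, n = m + 1 := ⟨n - 1, by omega⟩
    have hfun : G c (m + 1) 0 = fun t => t ^ (m + 1) / (m + 1).factorial * Real.cosh (c * t) :=
      funext fun _ => rfl
    rw [hfun]
    have hch : HasDerivAt (fun t : ℝ => Real.cosh (c * t)) (Real.sinh (c * t) * c) t :=
      hasDerivAt_cosh_mul c t
    have hpow : HasDerivAt (fun t : ℝ => t ^ (m + 1) / (m + 1).factorial)
        (((m : ℝ) + 1) * t ^ m / (m + 1).factorial) t := by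
      simpa using (hasDerivAt_pow (m + 1) t).div_const ((m + 1).factorial : ℝ)
    have h := hpow.mul hch
    convert h using 1 <;> try rfl
    show G c m 0 t + c * Gs c (m + 1) 0 t = _
    have h1 : G c m 0 t = t ^ m / m.factorial * Real.cosh (c * t) := rfl
    have h2 : Gs c (m + 1) 0 t = t ^ (m + 1) / (m + 1).factorial * Real.sinh (c * t) := rfl
    rw [h1, h2, Nat.factorial_succ]
    have hm : (m.factorial : ℝ) ≠ 0 := Nat.cast_ne_zero.mpr m.factorial_ne_zero
    push_cast
    field_simp
  | k + 1 =>
    exact hasDerivAt_G_succ c n k t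

lemma hasDerivAt_Gs (c : ℝ) (n k : ℕ) (t : ℝ) (h : 1 ≤ n + k) :
    HasDerivAt (Gs c n k) (Gsd c n k t) t := by
  match k with
  | 0 =>
    obtain ⟨m, rfl⟩ : ∃ m, n = m + 1 := ⟨n - 1, by omega⟩
    have hfun : Gs c (m + 1) 0 = fun t => t ^ (m + 1) / (m + 1).factorial * Real.sinh (c * t) :=
      funext fun _ => rfl
    rw [hfun]
    have hsh : HasDerivAt (fun t : ℝ => Real.sinh (c * t)) (Real.cosh (c * t) * c) t :=
      hasDerivAt_sinh_mul c t
    have hpow : HasDerivAt (fun t : ℝ => t ^ (m + 1) / (m + 1).factorial)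
        (((m : ℝ) + 1) * t ^ m / (m + 1).factorial) t := by
      simpa using (hasDerivAt_pow (m + 1) t).div_const ((m + 1).factorial : ℝ)
    have h := hpow.mul hsh
    convert h using 1 <;> try rfl
    show Gs c m 0 t + c * G c (m + 1) 0 t = _
    have h1 : Gs c m 0 t = t ^ m / m.factorial * Real.sinh (c * t) := rfl
    have h2 : G c (m + 1) 0 t = t ^ (m + 1) / (m + 1).factorial * Real.cosh (c * t) := rfl
    rw [h1, h2, Nat.factorial_succ]
    have hm : (m.factorial : ℝ) ≠ 0 := Nat.cast_ne_zero.mpr m.factorial_ne_zero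
    push_cast
    field_simp
  | k + 1 =>
    exact hasDerivAt_Gs_succ c n k t

lemma hasDerivAt_Gd (c : ℝ) (n k : ℕ) (t : ℝ) (h : 2 ≤ n) :
    HasDerivAt (Gd c n k) (Gdd c n k t) t := by
  match k with
  | 0 =>
    have hfun : Gd c n 0 = fun t => G c (n - 1) 0 t + c * Gs c n 0 t := funext fun _ => rfl
    rw [hfun]
    exact (hasDerivAt_G c (n - 1) 0 t (by omega)).add
      ((hasDerivAt_Gs c n 0 t (by omega)).const_mul c)
  | k + 1 =>
    have hfun : Gd c n (k + 1) = fun t => c * Gs c n (k + 1) t + G c (n - 1) k t :=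
      funext fun _ => rfl
    rw [hfun]
    exact ((hasDerivAt_Gs_succ c n k t).const_mul c).add
      (hasDerivAt_G c (n - 1) k t (by omega))

lemma G_at_zero (c : ℝ) (n k : ℕ) (h : 1 ≤ n + k) : G c n k 0 = 0 := by
  match k with
  | 0 =>
    have : G c n 0 0 = (0:ℝ) ^ n / n.factorial * Real.cosh (c * 0) := rfl
    rw [this, zero_pow (by omega)]; ring
  | k + 1 =>
    show (∫ s in (0:ℝ)..0, Real.cosh (c * s) * G c (n - 1) k (0 - s)) = 0
    simp

lemma Gs_at_zero (c : ℝ) (n k : ℕ) (h : 1 ≤ n + k) : Gs c n k 0 = 0 := by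
  match k with
  | 0 =>
    have : Gs c n 0 0 = (0:ℝ) ^ n / n.factorial * Real.sinh (c * 0) := rfl
    rw [this, zero_pow (by omega)]; ring
  | k + 1 =>
    show (∫ s in (0:ℝ)..0, Real.sinh (c * s) * G c (n - 1) k (0 - s)) = 0
    simp

lemma Gs_succ_at_zero (c : ℝ) (n k : ℕ) : Gs c n (k + 1) 0 = 0 := Gs_at_zero c n (k+1) (by omega)

lemma Gd_at_zero (c : ℝ) (n k : ℕ) (h : 2 ≤ n) : Gd c n k 0 = 0 := by
  match k with
  | 0 =>
    show G c (n - 1) 0 0 + c * Gs c n 0 0 = 0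
    rw [G_at_zero c (n-1) 0 (by omega), Gs_at_zero c n 0 (by omega)]; ring
  | k + 1 =>
    show c * Gs c n (k + 1) 0 + G c (n - 1) k 0 = 0
    rw [Gs_succ_at_zero, G_at_zero c (n-1) k (by omega)]; ring

lemma exp_unique {a : ℝ} {f : ℝ → ℝ} (hf : ∀ t, HasDerivAt f (a * f t) t) (h0 : f 0 = 0)
    (t : ℝ) : f t = 0 := by
  have key : ∀ x, HasDerivAt (fun x => Real.exp (-a * x) * f x) 0 x := by
    intro x
    have hlin : HasDerivAt (fun x : ℝ => -a * x) (-a) x := by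
      simpa using (hasDerivAt_id x).const_mul (-a)
    have h1 : HasDerivAt (fun x : ℝ => Real.exp (-a * x)) (Real.exp (-a * x) * (-a)) x :=
      hlin.exp
    have h := h1.mul (hf x)
    convert h using 1 <;> try rfl
    ring
  have hconst := is_const_of_deriv_eq_zero (f := fun x => Real.exp (-a * x) * f x)
    (fun x => (key x).differentiableAt) (fun x => (key x).deriv) t 0
  simp only [h0, mul_zero] at hconst
  have he : Real.exp (-a * t) ≠ 0 := Real.exp_ne_zero _
  exact (mul_eq_zero.mp hconst).resolve_left he

lemma pair_unique {c : ℝ} {φ ψ : ℝ → ℝ} (hφ : ∀ t, HasDerivAt φ (c * ψ t) t)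
    (hψ : ∀ t, HasDerivAt ψ (c * φ t) t) (hφ0 : φ 0 = 0) (hψ0 : ψ 0 = 0) (t : ℝ) :
    φ t = 0 ∧ ψ t = 0 := by
  have hu : ∀ x, (φ x + ψ x) = 0 := by
    refine exp_unique (a := c) (f := fun x => φ x + ψ x) (fun x => ?_) (by simp [hφ0, hψ0])
    have h := (hφ x).add (hψ x)
    convert h using 1 <;> try rfl
    ring
  have hv : ∀ x, (φ x - ψ x) = 0 := by
    refine exp_unique (a := -c) (f := fun x => φ x - ψ x) (fun x => ?_) (by simp [hφ0, hψ0])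
    have h := (hφ x).sub (hψ x)
    convert h using 1 <;> try rfl
    ring
  exact ⟨by linarith [hu t, hv t], by linarith [hu t, hv t]⟩

lemma phi_psi (c : ℝ) : ∀ k m, k + 2 ≤ m → ∀ t,
    (2 * Gd c m (k + 1) t - G c (m - 1) (k + 1) t - Gd c m k t = 0) ∧
    (2 * c * G c m (k + 1) t - Gs c (m - 1) (k + 1) t - c * G c m k t = 0) := by
  intro k
  induction k with
  | zero =>
    intro m hm t
    have hφ : ∀ t, HasDerivAt
        (fun t => 2 * Gd c m (0 + 1) t - G c (m - 1) (0 + 1) t - Gd c m 0 t)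
        (c * (2 * c * G c m (0 + 1) t - Gs c (m - 1) (0 + 1) t - c * G c m 0 t)) t := by
      intro t
      have h1 := hasDerivAt_Gd c m 1 t (by omega)
      have h2 := hasDerivAt_G c (m - 1) 1 t (by omega)
      have h3 := hasDerivAt_Gd c m 0 t (by omega)
      have h := ((h1.const_mul 2).sub h2).sub h3
      convert h using 1 <;> try rfl
      show c * (2 * c * G c m 1 t - Gs c (m - 1) 1 t - c * G c m 0 t)
        = 2 * Gdd c m 1 t - Gd c (m - 1) 1 t - Gdd c m 0 t
      show c * (2 * c * G c m 1 t - Gs c (m - 1) 1 t - c * G c m 0 t)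
        = 2 * (c * (c * G c m 1 t) + (G c (m - 1 - 1) 0 t + c * Gs c (m - 1) 0 t))
          - (c * Gs c (m - 1) 1 t + G c (m - 1 - 1) 0 t)
          - ((G c (m - 1 - 1) 0 t + c * Gs c (m - 1) 0 t)
              + c * (Gs c (m - 1) 0 t + c * G c m 0 t))
      ring
    have hψ : ∀ t, HasDerivAt
        (fun t => 2 * c * G c m (0 + 1) t - Gs c (m - 1) (0 + 1) t - c * G c m 0 t)
        (c * (2 * Gd c m (0 + 1) t - G c (m - 1) (0 + 1) t - Gd c m 0 t)) t := by
      intro t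
      have h1 := hasDerivAt_G c m 1 t (by omega)
      have h2 := hasDerivAt_Gs c (m - 1) 1 t (by omega)
      have h3 := hasDerivAt_G c m 0 t (by omega)
      have h := ((h1.const_mul (2 * c)).sub h2).sub (h3.const_mul c)
      convert h using 1 <;> try rfl
      show c * (2 * Gd c m 1 t - G c (m - 1) 1 t - Gd c m 0 t)
        = 2 * c * Gd c m 1 t - Gsd c (m - 1) 1 t - c * Gd c m 0 t
      show c * (2 * Gd c m 1 t - G c (m - 1) 1 t - Gd c m 0 t)
        = 2 * c * Gd c m 1 t - c * G c (m - 1) 1 t - c * Gd c m 0 t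
      ring
    refine pair_unique hφ hψ ?_ ?_ t
    · show 2 * Gd c m (0 + 1) 0 - G c (m - 1) (0 + 1) 0 - Gd c m 0 0 = 0
      rw [Gd_at_zero c m (0 + 1) (by omega), Gd_at_zero c m 0 (by omega),
        G_at_zero c (m - 1) (0 + 1) (by omega)]
      ring
    · show 2 * c * G c m (0 + 1) 0 - Gs c (m - 1) (0 + 1) 0 - c * G c m 0 0 = 0
      rw [G_at_zero c m (0 + 1) (by omega), G_at_zero c m 0 (by omega),
        Gs_at_zero c (m - 1) (0 + 1) (by omega)]
      ring
  | succ k ih =>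
    intro m hm t
    have hφ : ∀ t, HasDerivAt
        (fun t => 2 * Gd c m (k + 1 + 1) t - G c (m - 1) (k + 1 + 1) t - Gd c m (k + 1) t)
        (c * (2 * c * G c m (k + 1 + 1) t - Gs c (m - 1) (k + 1 + 1) t
          - c * G c m (k + 1) t)) t := by
      intro t
      have h1 := hasDerivAt_Gd c m (k + 2) t (by omega)
      have h2 := hasDerivAt_G c (m - 1) (k + 2) t (by omega)
      have h3 := hasDerivAt_Gd c m (k + 1) t (by omega)
      have h := ((h1.const_mul 2).sub h2).sub h3
      convert h using 1 <;> try rfl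
      have hIH := (ih (m - 1) (by omega) t).1
      show c * (2 * c * G c m (k + 2) t - Gs c (m - 1) (k + 2) t - c * G c m (k + 1) t)
        = 2 * Gdd c m (k + 2) t - Gd c (m - 1) (k + 2) t - Gdd c m (k + 1) t
      show c * (2 * c * G c m (k + 2) t - Gs c (m - 1) (k + 2) t - c * G c m (k + 1) t)
        = 2 * (c * (c * G c m (k + 2) t) + Gd c (m - 1) (k + 1) t)
          - (c * Gs c (m - 1) (k + 2) t + G c (m - 1 - 1) (k + 1) t)
          - (c * (c * G c m (k + 1) t) + Gd c (m - 1) k t)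
      linear_combination -hIH
    have hψ : ∀ t, HasDerivAt
        (fun t => 2 * c * G c m (k + 1 + 1) t - Gs c (m - 1) (k + 1 + 1) t
          - c * G c m (k + 1) t)
        (c * (2 * Gd c m (k + 1 + 1) t - G c (m - 1) (k + 1 + 1) t - Gd c m (k + 1) t)) t := by
      intro t
      have h1 := hasDerivAt_G c m (k + 2) t (by omega)
      have h2 := hasDerivAt_Gs c (m - 1) (k + 2) t (by omega)
      have h3 := hasDerivAt_G c m (k + 1) t (by omega)
      have h := ((h1.const_mul (2 * c)).sub h2).sub (h3.const_mul c)
      convert h using 1 <;> try rfl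
      show c * (2 * Gd c m (k + 2) t - G c (m - 1) (k + 2) t - Gd c m (k + 1) t)
        = 2 * c * Gd c m (k + 2) t - c * G c (m - 1) (k + 2) t - c * Gd c m (k + 1) t
      ring
    refine pair_unique hφ hψ ?_ ?_ t
    · show 2 * Gd c m (k + 1 + 1) 0 - G c (m - 1) (k + 1 + 1) 0 - Gd c m (k + 1) 0 = 0
      rw [Gd_at_zero c m (k + 1 + 1) (by omega), Gd_at_zero c m (k + 1) (by omega),
        G_at_zero c (m - 1) (k + 1 + 1) (by omega)]
      ring
    · show 2 * c * G c m (k + 1 + 1) 0 - Gs c (m - 1) (k + 1 + 1) 0 - c * G c m (k + 1) 0 = 0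
      rw [G_at_zero c m (k + 1 + 1) (by omega), G_at_zero c m (k + 1) (by omega),
        Gs_at_zero c (m - 1) (k + 1 + 1) (by omega)]
      ring

theorem G_ode (c : ℝ) (n k : ℕ) (hc : 0 < c) (hkn : k + 2 ≤ n) (t : ℝ) (ht : 0 < t) :
    deriv (deriv (G c n k)) t =
      2 * deriv (G c (n - 1) k) t - G c (n - 2) k t + c ^ 2 * G c n k t := by
  have hd : deriv (G c n k) = Gd c n k :=
    funext fun x => (hasDerivAt_G c n k x (by omega)).deriv
  have hd1 : deriv (G c (n - 1) k) t = Gd c (n - 1) k t :=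
    (hasDerivAt_G c (n - 1) k t (by omega)).deriv
  rw [hd, hd1, (hasDerivAt_Gd c n k t (by omega)).deriv]
  match k, hkn with
  | 0, hkn =>
    show Gd c (n - 1) 0 t + c * Gsd c n 0 t = _
    show (G c (n - 1 - 1) 0 t + c * Gs c (n - 1) 0 t)
      + c * (Gs c (n - 1) 0 t + c * G c n 0 t) = _
    show _ = 2 * (G c (n - 1 - 1) 0 t + c * Gs c (n - 1) 0 t) - G c (n - 2) 0 t
      + c ^ 2 * G c n 0 t
    rw [show n - 1 - 1 = n - 2 from by omega]
    ring
  | k + 1, hkn =>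
    show c * (c * G c n (k + 1) t) + Gd c (n - 1) k t = _
    have hphi := (phi_psi c k (n - 1) (by omega) t).1
    rw [show n - 1 - 1 = n - 2 from by omega] at hphi
    show _ = 2 * Gd c (n - 1) (k + 1) t - G c (n - 2) (k + 1) t + c ^ 2 * G c n (k + 1) t
    linear_combination -hphi
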